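/- Among unit-area equilateral convex pentagons with two adjacent angles summing to π, the minimum perimeter is 5/√(1+√3/4) ≈ 4.177, attained when the two supplementary angles both equal π/2. -/

import Mathlib

open Finset

noncomputable section

abbrev Pt : Type := EuclideanSpace ℝ (Fin 2)

def cross2 (p q : Pt) : ℝ := p 0 * q 1 - p 1 * q 0

def perimeter {n : ℕ} [NeZero n] (v : Fin n → Pt) : ℝ :=
  ∑ i, dist (v i) (v (i + 1))

def shoelace {n : ℕ} [NeZero n] (v : Fin n → Pt) : ℝ :=
  (∑ i, (v i 0 * v (i + 1) 1 - v (i + 1) 0 * v i 1)) / 2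

def polyArea {n : ℕ} [NeZero n] (v : Fin n → Pt) : ℝ := |shoelace v|

def IsSimplePolygon {n : ℕ} [NeZero n] (v : Fin n → Pt) : Prop :=
  Function.Injective v ∧
  (∀ i : Fin n,
    segment ℝ (v i) (v (i + 1)) ∩ segment ℝ (v (i + 1)) (v (i + 1 + 1)) = {v (i + 1)}) ∧
  (∀ i j : Fin n, j ≠ i → j ≠ i + 1 → j + 1 ≠ i →
    segment ℝ (v i) (v (i + 1)) ∩ segment ℝ (v j) (v (j + 1)) = ∅)

/-- A simple, positively (counterclockwise) oriented polygon. -/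
def IsPolygon {n : ℕ} [NeZero n] (v : Fin n → Pt) : Prop :=
  IsSimplePolygon v ∧ 0 < shoelace v

/-- Interior angle at vertex `i` of a positively oriented simple polygon:
the unoriented angle at a convex (left-turn) vertex, and its reflex complement
at a right-turn vertex. -/
def interiorAngle {n : ℕ} [NeZero n] (v : Fin n → Pt) (i : Fin n) : ℝ :=
  if 0 ≤ cross2 (v i - v (i - 1)) (v (i + 1) - v i) then
    EuclideanGeometry.angle (v (i - 1)) (v i) (v (i + 1))
  else 2 * Real.pi - EuclideanGeometry.angle (v (i - 1)) (v i) (v (i + 1))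

def IsConvexPolygon {n : ℕ} [NeZero n] (v : Fin n → Pt) : Prop :=
  IsPolygon v ∧ ∀ i, interiorAngle v i ≤ Real.pi

/-- The polygon is circumscribed about a circle: every edge is tangent to a
common circle of radius `r` centered at `c`. -/
def IsCircumscribed {n : ℕ} [NeZero n] (v : Fin n → Pt) : Prop :=
  ∃ c : Pt, ∃ r : ℝ, 0 < r ∧
    ∀ i : Fin n, Metric.infDist c (segment ℝ (v i) (v (i + 1))) = r

/-- The polygon is inscribed in a circle: all vertices lie on a common circle. -/
def IsInscribed {n : ℕ} [NeZero n] (v : Fin n → Pt) : Prop :=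
  ∃ c : Pt, ∃ r : ℝ, ∀ i : Fin n, dist c (v i) = r

def longestEdge {n : ℕ} [NeZero n] (v : Fin n → Pt) : ℝ :=
  Finset.univ.sup' Finset.univ_nonempty (fun i => dist (v i) (v (i + 1)))


def IsEquilateralPentagon (v : Fin 5 → Pt) : Prop :=
  ∀ i j : Fin 5, dist (v i) (v (i + 1)) = dist (v j) (v (j + 1))

def mk2 (a b : ℝ) : Pt := !₂[a, b]


lemma dist_sq (p q : Pt) : dist p q ^ 2 = (p 0 - q 0)^2 + (p 1 - q 1)^2 := by
  rw [EuclideanSpace.dist_eq, Real.sq_sqrt (by positivity)]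
  simp [Fin.sum_univ_two, Real.dist_eq, sq_abs]

lemma inner2 (p q : Pt) : (inner ℝ p q : ℝ) = p 0 * q 0 + p 1 * q 1 := by
  simp [PiLp.inner_apply, Fin.sum_univ_two]; ring

lemma cosang (a b c : Pt) :
    Real.cos (EuclideanGeometry.angle a b c) = inner ℝ (a-b) (c-b) / (‖a-b‖ * ‖c-b‖) := by
  rw [EuclideanGeometry.angle, InnerProductGeometry.cos_angle]
  rfl

lemma ang_pi_cross (a b c : Pt) (h : EuclideanGeometry.angle a b c = Real.pi) :
    cross2 (b - a) (c - b) = 0 := by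
  rw [EuclideanGeometry.angle, InnerProductGeometry.angle_eq_pi_iff] at h
  obtain ⟨h1, r, hr, hc⟩ := h
  have hcb : c - b = r • (a - b) := by rw [← vsub_eq_sub, ← vsub_eq_sub, hc]
  rw [cross2, hcb]
  have e0 : (r • (a-b)) 0 = r * (a 0 - b 0) := by simp
  have e1 : (r • (a-b)) 1 = r * (a 1 - b 1) := by simp
  have s0 : (b - a) 0 = b 0 - a 0 := by simp
  have s1 : (b - a) 1 = b 1 - a 1 := by simp
  rw [e0, e1, s0, s1]; ring

lemma crossle (p0 p1 q0 q1 x : ℝ) (hp : p0^2+p1^2 = x^2) (hq : q0^2+q1^2 = x^2) :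
    p0*q1 - p1*q0 ≤ x^2 := by
  nlinarith [sq_nonneg (p0*q0+p1*q1), sq_nonneg (p0*q1-p1*q0-x^2), sq_nonneg x, sq_nonneg (p0*q1-p1*q0)]

lemma trile (p0 p1 q0 q1 x : ℝ) (hp : p0^2+p1^2 = x^2) (hq : q0^2+q1^2 = x^2)
    (hpq : (p0-q0)^2+(p1-q1)^2 = x^2) :
    p0*q1 - p1*q0 ≤ Real.sqrt 3/2 * x^2 := by
  have hdot : p0*q0 + p1*q1 = x^2/2 := by linarith
  have ht2 : (p0*q1 - p1*q0)^2 = 3/4*(x^2*x^2) := by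
    have : (p0*q1 - p1*q0)^2 + (p0*q0+p1*q1)^2 = (p0^2+p1^2)*(q0^2+q1^2) := by ring
    rw [hdot, hp, hq] at this
    nlinarith [this]
  have hs3 : Real.sqrt 3 ^ 2 = 3 := Real.sq_sqrt (by norm_num)
  have hs3n : 0 ≤ Real.sqrt 3 := Real.sqrt_nonneg 3
  nlinarith [ht2, mul_nonneg hs3n (sq_nonneg x), sq_nonneg (p0*q1 - p1*q0 + Real.sqrt 3/2*x^2)]

lemma core (a0 a1 b0 b1 c0 c1 d0 d1 e0 e1 x : ℝ)
    (hAB : (a0-b0)^2+(a1-b1)^2 = x^2)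
    (hBC : (b0-c0)^2+(b1-c1)^2 = x^2)
    (hDE : (d0-e0)^2+(d1-e1)^2 = x^2)
    (hEA : (e0-a0)^2+(e1-a1)^2 = x^2)
    (hrel0 : a0 - b0 = d0 - c0) (hrel1 : a1 - b1 = d1 - c1) :
    (a0*b1 - b0*a1) + (b0*c1 - c0*b1) + (c0*d1 - d0*c1) + (d0*e1 - e0*d1) + (e0*a1 - a0*e1)
      ≤ 2*x^2*(1 + Real.sqrt 3/4) := by
  obtain rfl : d0 = c0 + a0 - b0 := by linarith
  obtain rfl : d1 = c1 + a1 - b1 := by linarith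
  have h1 : (b0-a0)*(c1-b1) - (b1-a1)*(c0-b0) ≤ x^2 :=
    crossle _ _ _ _ x (by linear_combination hAB) (by linear_combination hBC)
  have h2 : (c0-b0)*(e1-a1) - (c1-b1)*(e0-a0) ≤ Real.sqrt 3/2 * x^2 :=
    trile _ _ _ _ x (by linear_combination hBC) (by linear_combination hEA)
      (by linear_combination hDE)
  have key : (a0*b1 - b0*a1) + (b0*c1 - c0*b1) + (c0*(c1+a1-b1) - (c0+a0-b0)*c1)
      + ((c0+a0-b0)*e1 - e0*(c1+a1-b1)) + (e0*a1 - a0*e1)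
      = 2*((b0-a0)*(c1-b1) - (b1-a1)*(c0-b0)) + ((c0-b0)*(e1-a1) - (c1-b1)*(e0-a0)) := by ring
  rw [key]; linarith

lemma matchvec (u0 u1 m0 m1 w0 w1 x : ℝ) (hx : 0 < x)
    (hu : u0^2+u1^2 = x^2) (hm : m0^2+m1^2 = x^2) (hw : w0^2+w1^2 = x^2)
    (hdot : m0*u0 + m1*u1 = m0*w0 + m1*w1)
    (hcu : 0 ≤ m0*u1 - m1*u0) (hcw : 0 ≤ m0*w1 - m1*w0) :
    u0 = w0 ∧ u1 = w1 := by
  have hcross : m0*u1 - m1*u0 = m0*w1 - m1*w0 := by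
    have i1 : (m0*u1-m1*u0)^2 + (m0*u0+m1*u1)^2 = (m0^2+m1^2)*(u0^2+u1^2) := by ring
    have i2 : (m0*w1-m1*w0)^2 + (m0*w0+m1*w1)^2 = (m0^2+m1^2)*(w0^2+w1^2) := by ring
    rw [hu, hm] at i1
    rw [hw, hm] at i2
    rw [hdot] at i1
    have hsq : (m0*u1-m1*u0)^2 = (m0*w1-m1*w0)^2 := by linarith
    have hfac : ((m0*u1-m1*u0) - (m0*w1-m1*w0)) * ((m0*u1-m1*u0) + (m0*w1-m1*w0)) = 0 := by
      linear_combination hsq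
    rcases mul_eq_zero.1 hfac with h | h
    · linarith
    · linarith
  have L1 : m0*(u0-w0) + m1*(u1-w1) = 0 := by linarith
  have L2 : m0*(u1-w1) - m1*(u0-w0) = 0 := by linarith
  have hx2 : x^2 ≠ 0 := by positivity
  constructor
  · have h0 : x^2*(u0-w0) = 0 := by linear_combination m0*L1 - m1*L2 - (u0-w0)*hm
    rcases mul_eq_zero.1 h0 with h | h
    · exact absurd h hx2
    · linarith
  · have h1 : x^2*(u1-w1) = 0 := by linear_combination m1*L1 + m0*L2 - (u1-w1)*hm
    rcases mul_eq_zero.1 h1 with h | h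
    · exact absurd h hx2
    · linarith

lemma parallel (A B C D : Pt) (x : ℝ) (hx : 0 < x)
    (hAB : dist A B = x) (hBC : dist B C = x) (hCD : dist C D = x)
    (hcB : 0 ≤ cross2 (B - A) (C - B)) (hcC : 0 ≤ cross2 (C - B) (D - C))
    (hang : EuclideanGeometry.angle A B C + EuclideanGeometry.angle B C D = Real.pi) :
    A 0 - B 0 = D 0 - C 0 ∧ A 1 - B 1 = D 1 - C 1 := by
  have nAB : ‖A - B‖ = x := by rw [← dist_eq_norm]; exact hAB
  have nCB : ‖C - B‖ = x := by rw [← dist_eq_norm, dist_comm]; exact hBC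
  have nBC : ‖B - C‖ = x := by rw [← dist_eq_norm]; exact hBC
  have nDC : ‖D - C‖ = x := by rw [← dist_eq_norm, dist_comm]; exact hCD
  have hang2 : EuclideanGeometry.angle B C D = Real.pi - EuclideanGeometry.angle A B C := by
    linarith
  have hcos : Real.cos (EuclideanGeometry.angle B C D)
      = - Real.cos (EuclideanGeometry.angle A B C) := by
    rw [hang2, Real.cos_pi_sub]
  rw [cosang, cosang, nAB, nCB, nBC, nDC] at hcos
  have hxne : x * x ≠ 0 := by positivity
  rw [inner2, inner2] at hcos
  field_simp at hcos
  have s : ∀ p q : Pt, (p - q) 0 = p 0 - q 0 ∧ (p - q) 1 = p 1 - q 1 := by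
    intro p q; constructor <;> simp
  have hu : (A 0 - B 0)^2 + (A 1 - B 1)^2 = x^2 := by rw [← dist_sq, hAB]
  have hm : (C 0 - B 0)^2 + (C 1 - B 1)^2 = x^2 := by
    rw [← dist_sq, dist_comm, hBC]
  have hw : (D 0 - C 0)^2 + (D 1 - C 1)^2 = x^2 := by
    rw [← dist_sq, dist_comm, hCD]
  rw [cross2, (s B A).1, (s B A).2, (s C B).1, (s C B).2] at hcB
  rw [cross2, (s C B).1, (s C B).2, (s D C).1, (s D C).2] at hcC
  simp only [(s A B).1, (s A B).2, (s C B).1, (s C B).2, (s B C).1, (s B C).2, (s D C).1, (s D C).2] at hcos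
  exact matchvec (A 0 - B 0) (A 1 - B 1) (C 0 - B 0) (C 1 - B 1) (D 0 - C 0) (D 1 - C 1) x hx
    hu hm hw (by linear_combination hcos) (by nlinarith [hcB]) (by nlinarith [hcC])

lemma pent_bound (A B C D E : Pt) (x : ℝ) (hx : 0 < x)
    (hAB : dist A B = x) (hBC : dist B C = x) (hCD : dist C D = x)
    (hDE : dist D E = x) (hEA : dist E A = x)
    (hcB : 0 ≤ cross2 (B - A) (C - B)) (hcC : 0 ≤ cross2 (C - B) (D - C))
    (hang : EuclideanGeometry.angle A B C + EuclideanGeometry.angle B C D = Real.pi) :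
    (A 0 * B 1 - B 0 * A 1) + (B 0 * C 1 - C 0 * B 1) + (C 0 * D 1 - D 0 * C 1)
      + (D 0 * E 1 - E 0 * D 1) + (E 0 * A 1 - A 0 * E 1) ≤ 2*x^2*(1 + Real.sqrt 3/4) := by
  obtain ⟨hr0, hr1⟩ := parallel A B C D x hx hAB hBC hCD hcB hcC hang
  refine core (A 0) (A 1) (B 0) (B 1) (C 0) (C 1) (D 0) (D 1) (E 0) (E 1) x ?_ ?_ ?_ ?_ hr0 hr1
  · rw [← dist_sq, hAB]
  · rw [← dist_sq, hBC]
  · rw [← dist_sq, hDE]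
  · rw [← dist_sq, hEA]


lemma distx (p q : Pt) (x : ℝ) (hx : 0 ≤ x)
    (h : (p 0 - q 0)^2 + (p 1 - q 1)^2 = x^2) : dist p q = x := by
  have h2 : dist p q ^ 2 = x ^ 2 := by rw [dist_sq, h]
  have hf : (dist p q - x) * (dist p q + x) = 0 := by linear_combination h2
  rcases mul_eq_zero.1 hf with h' | h'
  · linarith
  · have := dist_nonneg (x := p) (y := q)
    linarith

lemma pt_ext (p q : Pt) (h0 : p 0 = q 0) (h1 : p 1 = q 1) : p = q := by
  apply WithLp.ofLp_injective; funext j; fin_cases j <;> assumption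

lemma angle_right (a b c : Pt)
    (h : (a 0 - b 0)*(c 0 - b 0) + (a 1 - b 1)*(c 1 - b 1) = 0) :
    EuclideanGeometry.angle a b c = Real.pi / 2 := by
  rw [EuclideanGeometry.angle, InnerProductGeometry.angle]
  have hi : (inner ℝ (a -ᵥ b) (c -ᵥ b) : ℝ) = 0 := by
    rw [vsub_eq_sub, vsub_eq_sub, inner2,
      show (a-b) 0 = a 0 - b 0 from rfl, show (a-b) 1 = a 1 - b 1 from rfl,
      show (c-b) 0 = c 0 - b 0 from rfl, show (c-b) 1 = c 1 - b 1 from rfl]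
    linarith
  rw [hi, zero_div, Real.arccos_zero]

lemma seg_lin (a b z : Pt) (α β : ℝ) (hz : z ∈ segment ℝ a b) :
    min (α*a 0+β*a 1) (α*b 0+β*b 1) ≤ α*z 0+β*z 1 ∧
    α*z 0+β*z 1 ≤ max (α*a 0+β*a 1) (α*b 0+β*b 1) := by
  obtain ⟨u, v, hu, hv, huv, rfl⟩ := hz
  have h0 : (u • a + v • b) 0 = u * a 0 + v * b 0 := by simp
  have h1 : (u • a + v • b) 1 = u * a 1 + v * b 1 := by simp
  rw [h0, h1]
  set A := α*a 0+β*a 1 with hA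
  set B := α*b 0+β*b 1 with hB
  have e : α * (u * a 0 + v * b 0) + β * (u * a 1 + v * b 1) = u*A + v*B := by rw [hA, hB]; ring
  rw [e]
  constructor
  · have h1 := mul_le_mul_of_nonneg_left (min_le_left A B) hu
    have h2 := mul_le_mul_of_nonneg_left (min_le_right A B) hv
    have h3 : u*(A⊓B)+v*(A⊓B) = A⊓B := by rw [← add_mul, huv, one_mul]
    linarith
  · have h1 := mul_le_mul_of_nonneg_left (le_max_left A B) hu
    have h2 := mul_le_mul_of_nonneg_left (le_max_right A B) hv
    have h3 : u*(A⊔B)+v*(A⊔B) = A⊔B := by rw [← add_mul, huv, one_mul]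
    linarith

lemma seg_pin (a b z : Pt) (α β c : ℝ) (hz : z ∈ segment ℝ a b)
    (ha : α*a 0+β*a 1 = c) (hb : α*b 0+β*b 1 = c) : α*z 0+β*z 1 = c := by
  obtain ⟨h1, h2⟩ := seg_lin a b z α β hz
  rw [ha, hb, min_self] at h1
  rw [ha, hb, max_self] at h2
  linarith

lemma seg_ub (a b z : Pt) (α β t : ℝ) (hz : z ∈ segment ℝ a b)
    (ha : α*a 0+β*a 1 ≤ t) (hb : α*b 0+β*b 1 ≤ t) : α*z 0+β*z 1 ≤ t :=
  le_trans (seg_lin a b z α β hz).2 (max_le ha hb)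

lemma seg_lb (a b z : Pt) (α β t : ℝ) (hz : z ∈ segment ℝ a b)
    (ha : t ≤ α*a 0+β*a 1) (hb : t ≤ α*b 0+β*b 1) : t ≤ α*z 0+β*z 1 :=
  le_trans (le_min ha hb) (seg_lin a b z α β hz).1

lemma seg_disj (a b c d : Pt) (α β t : ℝ)
    (h1 : α*a 0+β*a 1 ≤ t) (h2 : α*b 0+β*b 1 ≤ t)
    (h3 : t < α*c 0+β*c 1) (h4 : t < α*d 0+β*d 1) :
    segment ℝ a b ∩ segment ℝ c d = ∅ := by
  rw [Set.eq_empty_iff_forall_notMem]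
  rintro z ⟨hz1, hz2⟩
  have hu := seg_ub a b z α β t hz1 h1 h2
  have hl := seg_lb c d z α β (min (α*c 0+β*c 1) (α*d 0+β*d 1)) hz2 (min_le_left _ _) (min_le_right _ _)
  have := lt_min h3 h4
  linarith

def W (x h : ℝ) : Fin 5 → Pt := ![mk2 0 0, mk2 x 0, mk2 x x, mk2 (x/2) (x+h), mk2 0 x]

set_option maxHeartbeats 2000000 in
lemma part2 : ∃ w : Fin 5 → Pt, IsConvexPolygon w ∧ polyArea w = 1 ∧
    IsEquilateralPentagon w ∧
    (∃ i, interiorAngle w i = Real.pi / 2 ∧ interiorAngle w (i + 1) = Real.pi / 2) ∧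
    perimeter w = 5 / Real.sqrt (1 + Real.sqrt 3 / 4) := by
  have hs3 : Real.sqrt 3 ^ 2 = 3 := Real.sq_sqrt (by norm_num)
  have hs3p : 0 < Real.sqrt 3 := Real.sqrt_pos.2 (by norm_num)
  set s : ℝ := Real.sqrt (1 + Real.sqrt 3 / 4) with hsdef
  have hsp : 0 < s := Real.sqrt_pos.2 (by positivity)
  have hs2 : s ^ 2 = 1 + Real.sqrt 3 / 4 := Real.sq_sqrt (by positivity)
  set x : ℝ := 1 / s with hxdef
  have hxp : 0 < x := by positivity
  have hxs : x * s = 1 := by rw [hxdef]; field_simp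
  have hx2 : x^2 * (1 + Real.sqrt 3/4) = 1 := by rw [← hs2]; nlinarith [hxs]
  set h : ℝ := Real.sqrt 3 / 2 * x with hhdef
  have hhp : 0 < h := by positivity
  have hh2 : h^2 = 3/4 * x^2 := by rw [hhdef]; linear_combination (x^2/4) * hs3
  have hedges : ∀ i : Fin 5, dist (W x h i) (W x h (i+1)) = x := by
    intro i
    fin_cases i
    · exact distx _ _ x hxp.le (by show ((0:ℝ)-x)^2 + ((0:ℝ)-0)^2 = x^2; ring)
    · exact distx _ _ x hxp.le (by show ((x:ℝ)-x)^2 + ((0:ℝ)-x)^2 = x^2; ring)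
    · exact distx _ _ x hxp.le (by show (x-x/2)^2 + (x-(x+h))^2 = x^2; linear_combination hh2)
    · exact distx _ _ x hxp.le (by show (x/2-0)^2 + (x+h-x)^2 = x^2; linear_combination hh2)
    · exact distx _ _ x hxp.le (by show ((0:ℝ)-0)^2 + (x-(0:ℝ))^2 = x^2; ring)
  have hsh : shoelace (W x h) = 1 := by
    rw [shoelace, Fin.sum_univ_five, show ((4:Fin 5)+1) = 0 by decide]
    show ((0:ℝ)*0 - x*0 + (x*x - x*0) + (x*(x+h) - x/2*x) + (x/2*x - 0*(x+h)) + (0*0 - 0*x))/2 = 1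
    linear_combination hx2 + (x/2)*hhdef
  have hcrs : ∀ i : Fin 5, 0 ≤ cross2 (W x h i - W x h (i - 1)) (W x h (i + 1) - W x h i) := by
    intro i
    fin_cases i
    · show 0 ≤ ((0:ℝ)-0)*((0:ℝ)-0) - ((0:ℝ)-x)*(x-0); nlinarith [hxp]
    · show 0 ≤ (x-(0:ℝ))*(x-(0:ℝ)) - ((0:ℝ)-0)*(x-x); nlinarith [hxp]
    · show 0 ≤ (x-x)*((x+h)-x) - (x-(0:ℝ))*(x/2-x); nlinarith [hxp]
    · show 0 ≤ (x/2-x)*(x-(x+h)) - ((x+h)-x)*((0:ℝ)-x/2); nlinarith [hxp, hhp]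
    · show 0 ≤ ((0:ℝ)-x/2)*((0:ℝ)-x) - (x-(x+h))*((0:ℝ)-0); nlinarith [hxp, hhp]
  refine ⟨W x h, ⟨⟨⟨?inj, ?adj, ?nadj⟩, ?spos⟩, ?conv⟩, ?area, ?equi, ?angs, ?per⟩
  case inj =>
    intro a b hab
    fin_cases a <;> fin_cases b <;>
      first
        | rfl
        | exact absurd (congrFun (congrArg WithLp.ofLp hab) 0) (show (0:ℝ) ≠ x by linarith)
        | exact absurd (congrFun (congrArg WithLp.ofLp hab) 1) (show (0:ℝ) ≠ x by linarith)
        | exact absurd (congrFun (congrArg WithLp.ofLp hab) 0) (show x ≠ (0:ℝ) by linarith)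
        | exact absurd (congrFun (congrArg WithLp.ofLp hab) 1) (show x ≠ (0:ℝ) by linarith)
        | exact absurd (congrFun (congrArg WithLp.ofLp hab) 0) (show (0:ℝ) ≠ x/2 by linarith)
        | exact absurd (congrFun (congrArg WithLp.ofLp hab) 0) (show x/2 ≠ (0:ℝ) by linarith)
        | exact absurd (congrFun (congrArg WithLp.ofLp hab) 0) (show x ≠ x/2 by linarith)
        | exact absurd (congrFun (congrArg WithLp.ofLp hab) 0) (show x/2 ≠ x by linarith)
  case adj =>
    intro i
    fin_cases i
    · show segment ℝ (mk2 0 0) (mk2 x 0) ∩ segment ℝ (mk2 x 0) (mk2 x x) = {mk2 x 0}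
      refine Set.eq_singleton_iff_unique_mem.2 ⟨⟨right_mem_segment ℝ _ _, left_mem_segment ℝ _ _⟩, ?_⟩
      rintro z ⟨hz1, hz2⟩
      have e1 := seg_pin (mk2 0 0) (mk2 x 0) z 0 1 0 hz1 (by show (0:ℝ)*0+1*0 = 0; ring) (by show (0:ℝ)*x+1*0 = 0; ring)
      have e0 := seg_pin (mk2 x 0) (mk2 x x) z 1 0 x hz2 (by show (1:ℝ)*x+0*0 = x; ring) (by show (1:ℝ)*x+0*x = x; ring)
      exact pt_ext z (mk2 x 0) (by show z 0 = x; linarith) (by show z 1 = 0; linarith)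
    · show segment ℝ (mk2 x 0) (mk2 x x) ∩ segment ℝ (mk2 x x) (mk2 (x/2) (x+h)) = {mk2 x x}
      refine Set.eq_singleton_iff_unique_mem.2 ⟨⟨right_mem_segment ℝ _ _, left_mem_segment ℝ _ _⟩, ?_⟩
      rintro z ⟨hz1, hz2⟩
      have e0 := seg_pin (mk2 x 0) (mk2 x x) z 1 0 x hz1 (by show (1:ℝ)*x+0*0 = x; ring) (by show (1:ℝ)*x+0*x = x; ring)
      have e1a := seg_ub (mk2 x 0) (mk2 x x) z 0 1 x hz1 (by show (0:ℝ)*x+1*0 ≤ x; linarith) (by show (0:ℝ)*x+1*x ≤ x; linarith)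
      have e1b := seg_lb (mk2 x x) (mk2 (x/2) (x+h)) z 0 1 x hz2 (by show x ≤ (0:ℝ)*x+1*x; linarith) (by show x ≤ (0:ℝ)*(x/2)+1*(x+h); linarith)
      exact pt_ext z (mk2 x x) (by show z 0 = x; linarith) (by show z 1 = x; linarith)
    · show segment ℝ (mk2 x x) (mk2 (x/2) (x+h)) ∩ segment ℝ (mk2 (x/2) (x+h)) (mk2 0 x) = {mk2 (x/2) (x+h)}
      refine Set.eq_singleton_iff_unique_mem.2 ⟨⟨right_mem_segment ℝ _ _, left_mem_segment ℝ _ _⟩, ?_⟩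
      rintro z ⟨hz1, hz2⟩
      have e1 := seg_pin (mk2 x x) (mk2 (x/2) (x+h)) z (Real.sqrt 3) 1 (Real.sqrt 3 * x + x) hz1
        (by show Real.sqrt 3*x+1*x = Real.sqrt 3 * x + x; ring)
        (by show Real.sqrt 3*(x/2)+1*(x+h) = Real.sqrt 3 * x + x; rw [hhdef]; ring)
      have e2 := seg_pin (mk2 (x/2) (x+h)) (mk2 0 x) z (-(Real.sqrt 3)) 1 x hz2
        (by show -(Real.sqrt 3)*(x/2)+1*(x+h) = x; rw [hhdef]; ring)
        (by show -(Real.sqrt 3)*0+1*x = x; ring)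
      have hz0 : z 0 = x/2 := by
        have hc : 2*Real.sqrt 3*(z 0) = 2*Real.sqrt 3*(x/2) := by linarith
        exact mul_left_cancel₀ (by positivity) hc
      have hz1' : z 1 = x + h := by
        rw [hz0] at e2
        rw [hhdef]; linarith
      exact pt_ext z (mk2 (x/2) (x+h)) hz0 hz1'
    · show segment ℝ (mk2 (x/2) (x+h)) (mk2 0 x) ∩ segment ℝ (mk2 0 x) (mk2 0 0) = {mk2 0 x}
      refine Set.eq_singleton_iff_unique_mem.2 ⟨⟨right_mem_segment ℝ _ _, left_mem_segment ℝ _ _⟩, ?_⟩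
      rintro z ⟨hz1, hz2⟩
      have e0 := seg_pin (mk2 0 x) (mk2 0 0) z 1 0 0 hz2 (by show (1:ℝ)*0+0*x = 0; ring) (by show (1:ℝ)*0+0*0 = 0; ring)
      have e2 := seg_pin (mk2 (x/2) (x+h)) (mk2 0 x) z (-(Real.sqrt 3)) 1 x hz1
        (by show -(Real.sqrt 3)*(x/2)+1*(x+h) = x; rw [hhdef]; ring)
        (by show -(Real.sqrt 3)*0+1*x = x; ring)
      have hz0 : z 0 = 0 := by linarith
      refine pt_ext z (mk2 0 x) hz0 ?_
      show z 1 = x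
      rw [hz0] at e2; linarith
    · show segment ℝ (mk2 0 x) (mk2 0 0) ∩ segment ℝ (mk2 0 0) (mk2 x 0) = {mk2 0 0}
      refine Set.eq_singleton_iff_unique_mem.2 ⟨⟨right_mem_segment ℝ _ _, left_mem_segment ℝ _ _⟩, ?_⟩
      rintro z ⟨hz1, hz2⟩
      have e0 := seg_pin (mk2 0 x) (mk2 0 0) z 1 0 0 hz1 (by show (1:ℝ)*0+0*x = 0; ring) (by show (1:ℝ)*0+0*0 = 0; ring)
      have e1 := seg_pin (mk2 0 0) (mk2 x 0) z 0 1 0 hz2 (by show (0:ℝ)*0+1*0 = 0; ring) (by show (0:ℝ)*x+1*0 = 0; ring)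
      exact pt_ext z (mk2 0 0) (by show z 0 = 0; linarith) (by show z 1 = 0; linarith)
  case nadj =>
    intro i j h1 h2 h3
    fin_cases i <;> fin_cases j <;>
      first
        | (exact absurd rfl h1)
        | (exact absurd rfl h2)
        | (exact absurd rfl h3)
        | skip
    -- remaining valid pairs
    · -- i=0, j=2 : E0 vs E2
      show segment ℝ (mk2 0 0) (mk2 x 0) ∩ segment ℝ (mk2 x x) (mk2 (x/2) (x+h)) = ∅
      exact seg_disj _ _ _ _ 0 1 0 (by show (0:ℝ)*0+1*0 ≤ 0; linarith) (by show (0:ℝ)*x+1*0 ≤ 0; linarith)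
        (by show (0:ℝ) < 0*x+1*x; linarith) (by show (0:ℝ) < 0*(x/2)+1*(x+h); linarith)
    · -- i=0, j=3 : E0 vs E3
      show segment ℝ (mk2 0 0) (mk2 x 0) ∩ segment ℝ (mk2 (x/2) (x+h)) (mk2 0 x) = ∅
      exact seg_disj _ _ _ _ 0 1 0 (by show (0:ℝ)*0+1*0 ≤ 0; linarith) (by show (0:ℝ)*x+1*0 ≤ 0; linarith)
        (by show (0:ℝ) < 0*(x/2)+1*(x+h); linarith) (by show (0:ℝ) < 0*0+1*x; linarith)
    · -- i=1, j=3 : E1 vs E3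
      show segment ℝ (mk2 x 0) (mk2 x x) ∩ segment ℝ (mk2 (x/2) (x+h)) (mk2 0 x) = ∅
      rw [Set.inter_comm]
      exact seg_disj _ _ _ _ 1 0 (x/2) (by show (1:ℝ)*(x/2)+0*(x+h) ≤ x/2; linarith) (by show (1:ℝ)*0+0*x ≤ x/2; linarith)
        (by show x/2 < (1:ℝ)*x+0*0; linarith) (by show x/2 < (1:ℝ)*x+0*x; linarith)
    · -- i=1, j=4 : E1 vs E4
      show segment ℝ (mk2 x 0) (mk2 x x) ∩ segment ℝ (mk2 0 x) (mk2 0 0) = ∅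
      rw [Set.inter_comm]
      exact seg_disj _ _ _ _ 1 0 (x/2) (by show (1:ℝ)*0+0*x ≤ x/2; linarith) (by show (1:ℝ)*0+0*0 ≤ x/2; linarith)
        (by show x/2 < (1:ℝ)*x+0*0; linarith) (by show x/2 < (1:ℝ)*x+0*x; linarith)
    · -- i=2, j=0 : E2 vs E0
      show segment ℝ (mk2 x x) (mk2 (x/2) (x+h)) ∩ segment ℝ (mk2 0 0) (mk2 x 0) = ∅
      rw [Set.inter_comm]
      exact seg_disj _ _ _ _ 0 1 0 (by show (0:ℝ)*0+1*0 ≤ 0; linarith) (by show (0:ℝ)*x+1*0 ≤ 0; linarith)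
        (by show (0:ℝ) < 0*x+1*x; linarith) (by show (0:ℝ) < 0*(x/2)+1*(x+h); linarith)
    · -- i=2, j=4 : E2 vs E4
      show segment ℝ (mk2 x x) (mk2 (x/2) (x+h)) ∩ segment ℝ (mk2 0 x) (mk2 0 0) = ∅
      rw [Set.inter_comm]
      exact seg_disj _ _ _ _ 1 0 0 (by show (1:ℝ)*0+0*x ≤ 0; linarith) (by show (1:ℝ)*0+0*0 ≤ 0; linarith)
        (by show (0:ℝ) < 1*x+0*x; linarith) (by show (0:ℝ) < 1*(x/2)+0*(x+h); linarith)
    · -- i=3, j=0 : E3 vs E0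
      show segment ℝ (mk2 (x/2) (x+h)) (mk2 0 x) ∩ segment ℝ (mk2 0 0) (mk2 x 0) = ∅
      rw [Set.inter_comm]
      exact seg_disj _ _ _ _ 0 1 0 (by show (0:ℝ)*0+1*0 ≤ 0; linarith) (by show (0:ℝ)*x+1*0 ≤ 0; linarith)
        (by show (0:ℝ) < 0*(x/2)+1*(x+h); linarith) (by show (0:ℝ) < 0*0+1*x; linarith)
    · -- i=3, j=1 : E3 vs E1
      show segment ℝ (mk2 (x/2) (x+h)) (mk2 0 x) ∩ segment ℝ (mk2 x 0) (mk2 x x) = ∅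
      exact seg_disj _ _ _ _ 1 0 (x/2) (by show (1:ℝ)*(x/2)+0*(x+h) ≤ x/2; linarith) (by show (1:ℝ)*0+0*x ≤ x/2; linarith)
        (by show x/2 < (1:ℝ)*x+0*0; linarith) (by show x/2 < (1:ℝ)*x+0*x; linarith)
    · -- i=4, j=1 : E4 vs E1
      show segment ℝ (mk2 0 x) (mk2 0 0) ∩ segment ℝ (mk2 x 0) (mk2 x x) = ∅
      exact seg_disj _ _ _ _ 1 0 (x/2) (by show (1:ℝ)*0+0*x ≤ x/2; linarith) (by show (1:ℝ)*0+0*0 ≤ x/2; linarith)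
        (by show x/2 < (1:ℝ)*x+0*0; linarith) (by show x/2 < (1:ℝ)*x+0*x; linarith)
    · -- i=4, j=2 : E4 vs E2
      show segment ℝ (mk2 0 x) (mk2 0 0) ∩ segment ℝ (mk2 x x) (mk2 (x/2) (x+h)) = ∅
      exact seg_disj _ _ _ _ 1 0 0 (by show (1:ℝ)*0+0*x ≤ 0; linarith) (by show (1:ℝ)*0+0*0 ≤ 0; linarith)
        (by show (0:ℝ) < 1*x+0*x; linarith) (by show (0:ℝ) < 1*(x/2)+0*(x+h); linarith)
  case spos =>
    rw [hsh]; norm_num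
  case conv =>
    intro i
    rw [interiorAngle, if_pos (hcrs i)]
    exact EuclideanGeometry.angle_le_pi _ _ _
  case area =>
    rw [polyArea, hsh]; norm_num
  case equi =>
    intro i j
    rw [hedges i, hedges j]
  case angs =>
    refine ⟨0, ?_, ?_⟩
    · rw [interiorAngle, if_pos (hcrs 0)]
      apply angle_right
      show ((0:ℝ)-0)*(x-0) + (x-0)*((0:ℝ)-0) = 0
      ring
    · rw [interiorAngle, if_pos (hcrs (0+1))]
      apply angle_right
      show ((0:ℝ)-x)*(x-x) + ((0:ℝ)-0)*(x-0) = 0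
      ring
  case per =>
    rw [perimeter, Fin.sum_univ_five, hedges 0, hedges 1, hedges 2, hedges 3, hedges 4, hxdef]
    ring

lemma part1 (v : Fin 5 → Pt) (hconv : IsConvexPolygon v) (harea : polyArea v = 1)
    (hequi : IsEquilateralPentagon v)
    (hang : ∃ i, interiorAngle v i + interiorAngle v (i + 1) = Real.pi) :
    5 / Real.sqrt (1 + Real.sqrt 3 / 4) ≤ perimeter v := by
  set x := dist (v 0) (v 1) with hxdef
  have hxpos : 0 < x := by
    rw [hxdef]
    refine dist_pos.2 (fun h => ?_)
    exact absurd (hconv.1.1.1 h) (by decide)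
  have hedge : ∀ i : Fin 5, dist (v i) (v (i+1)) = x := fun i => hequi i 0
  -- cross nonneg at all vertices
  have hcr : ∀ i : Fin 5, 0 ≤ cross2 (v i - v (i-1)) (v (i+1) - v i) := by
    intro i
    by_contra h
    push_neg at h
    have hIA : interiorAngle v i
        = 2 * Real.pi - EuclideanGeometry.angle (v (i-1)) (v i) (v (i+1)) := by
      rw [interiorAngle, if_neg (not_le.2 h)]
    have hle := (hconv.2) i
    rw [hIA] at hle
    have hge := EuclideanGeometry.angle_le_pi (v (i-1)) (v i) (v (i+1))
    have heq : EuclideanGeometry.angle (v (i-1)) (v i) (v (i+1)) = Real.pi := by linarith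
    have := ang_pi_cross (v (i-1)) (v i) (v (i+1)) heq
    linarith [this, h]
  obtain ⟨i, hsum⟩ := hang
  have hi1 : (i+1) - 1 = i := add_sub_cancel_right i 1
  have hIAi : interiorAngle v i = EuclideanGeometry.angle (v (i-1)) (v i) (v (i+1)) := by
    rw [interiorAngle, if_pos (hcr i)]
  have hIAi1 : interiorAngle v (i+1)
      = EuclideanGeometry.angle (v i) (v (i+1)) (v (i+1+1)) := by
    rw [interiorAngle, hi1, if_pos]
    have := hcr (i+1)
    rwa [hi1] at this
  rw [hIAi, hIAi1] at hsum
  have hcB : 0 ≤ cross2 (v i - v (i-1)) (v (i+1) - v i) := hcr i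
  have hcC : 0 ≤ cross2 (v (i+1) - v i) (v (i+1+1) - v (i+1)) := by
    have := hcr (i+1); rwa [hi1] at this
  have hdAB : dist (v (i-1)) (v i) = x := by
    have := hedge (i-1); rwa [show (i-1)+1 = i from sub_add_cancel i 1] at this
  obtain ⟨hr0, hr1⟩ := parallel (v (i-1)) (v i) (v (i+1)) (v (i+1+1)) x hxpos
    hdAB (hedge i) (hedge (i+1)) hcB hcC hsum
  -- shoelace bound
  have hshoe : shoelace v ≤ x^2 * (1 + Real.sqrt 3/4) := by
    have hexp : shoelace v = ((v 0 0 * v 1 1 - v 1 0 * v 0 1) + (v 1 0 * v 2 1 - v 2 0 * v 1 1)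
        + (v 2 0 * v 3 1 - v 3 0 * v 2 1) + (v 3 0 * v 4 1 - v 4 0 * v 3 1)
        + (v 4 0 * v 0 1 - v 0 0 * v 4 1)) / 2 := by
      rw [shoelace, Fin.sum_univ_five, show ((4:Fin 5)+1) = 0 by decide]
      simp only [show (0:Fin 5)+1 = 1 by decide, show (1:Fin 5)+1 = 2 by decide, show (2:Fin 5)+1 = 3 by decide, show (3:Fin 5)+1 = 4 by decide]
    fin_cases i
    · have hb := pent_bound (v 4) (v 0) (v 1) (v 2) (v 3) x hxpos
        (by simpa [show (-1:Fin 5) = 4 by decide] using hdAB) (by simpa using hedge 0) (by simpa using hedge 1)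
        (by simpa using hedge 2) (by simpa using hedge 3)
        (by simpa [show (-1:Fin 5) = 4 by decide] using hcB) (by simpa using hcC) (by simpa [show (-1:Fin 5) = 4 by decide] using hsum)
      rw [hexp]; linarith [hb]
    · have hb := pent_bound (v 0) (v 1) (v 2) (v 3) (v 4) x hxpos
        (by simpa using hdAB) (by simpa using hedge 1) (by simpa using hedge 2)
        (by simpa using hedge 3) (by simpa using hedge 4)
        (by simpa using hcB) (by simpa using hcC) (by simpa using hsum)
      rw [hexp]; linarith [hb]
    · have hb := pent_bound (v 1) (v 2) (v 3) (v 4) (v 0) x hxpos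
        (by simpa using hdAB) (by simpa using hedge 2) (by simpa using hedge 3)
        (by simpa using hedge 4) (by simpa using hedge 0)
        (by simpa using hcB) (by simpa using hcC) (by simpa using hsum)
      rw [hexp]; linarith [hb]
    · have hb := pent_bound (v 2) (v 3) (v 4) (v 0) (v 1) x hxpos
        (by simpa using hdAB) (by simpa using hedge 3) (by simpa using hedge 4)
        (by simpa using hedge 0) (by simpa using hedge 1)
        (by simpa using hcB) (by simpa using hcC) (by simpa using hsum)
      rw [hexp]; linarith [hb]
    · have hb := pent_bound (v 3) (v 4) (v 0) (v 1) (v 2) x hxpos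
        (by simpa using hdAB) (by simpa using hedge 4) (by simpa using hedge 0)
        (by simpa using hedge 1) (by simpa using hedge 2)
        (by simpa using hcB) (by simpa using hcC) (by simpa using hsum)
      rw [hexp]; linarith [hb]
  -- area = 1
  have hpos : 0 < shoelace v := hconv.1.2
  have hone : shoelace v = 1 := by
    have : polyArea v = shoelace v := abs_of_pos hpos
    linarith [harea, this.symm.trans harea]
  rw [hone] at hshoe
  -- perimeter
  have hper : perimeter v = 5 * x := by
    rw [perimeter, Fin.sum_univ_five, hedge 0, hedge 1, hedge 2, hedge 3, hedge 4]; ring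
  rw [hper]
  have hs : (0:ℝ) < Real.sqrt (1 + Real.sqrt 3/4) := by positivity
  have hs2 : Real.sqrt (1 + Real.sqrt 3/4) ^ 2 = 1 + Real.sqrt 3/4 := by
    rw [Real.sq_sqrt]; positivity
  rw [div_le_iff₀ hs]
  nlinarith [hshoe, hs2, hxpos, hs, mul_pos hxpos hs]


theorem stmt18 :
    (∀ v : Fin 5 → Pt, IsConvexPolygon v → polyArea v = 1 →
      IsEquilateralPentagon v →
      (∃ i, interiorAngle v i + interiorAngle v (i + 1) = Real.pi) →
      5 / Real.sqrt (1 + Real.sqrt 3 / 4) ≤ perimeter v) ∧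
    ∃ w : Fin 5 → Pt, IsConvexPolygon w ∧ polyArea w = 1 ∧
      IsEquilateralPentagon w ∧
      (∃ i, interiorAngle w i = Real.pi / 2 ∧ interiorAngle w (i + 1) = Real.pi / 2) ∧
      perimeter w = 5 / Real.sqrt (1 + Real.sqrt 3 / 4) := by
  exact ⟨fun v hc ha he hn => part1 v hc ha he hn, part2⟩

end
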